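/- For m = 2, c_2(8n + 4) ≡ 0 (mod 2) for all n ≥ 0, where c_2(n) counts restricted binary partitions of n. -/

import Mathlib

open Multiset

def Res {n : ℕ} (P : Nat.Partition n) : Prop :=
  (∀ x ∈ P.parts, ∃ i, x = 2 ^ i) ∧ ∀ i, 2 ^ i ∈ P.parts → ∀ j < i, 2 ^ j ∈ P.parts

noncomputable def C (n : ℕ) : ℕ := Nat.card {P : Nat.Partition n // Res P}

lemma one_mem {n : ℕ} (hn : n ≠ 0) {P : Nat.Partition n} (h : Res P) : 1 ∈ P.parts := by
  have : P.parts ≠ 0 := by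
    intro h0
    exact hn (by simpa [h0] using P.parts_sum.symm)
  obtain ⟨x, hx⟩ := exists_mem_of_ne_zero this
  obtain ⟨i, rfl⟩ := h.1 x hx
  rcases Nat.eq_zero_or_pos i with rfl | hi
  · simpa using hx
  · simpa using h.2 i hx 0 hi

lemma count_one_mod {n : ℕ} {P : Nat.Partition n} (h : Res P) :
    P.parts.count 1 % 2 = n % 2 := by
  have h2 : 2 ∣ (P.parts.filter (¬ 1 = ·)).sum := by
    apply Multiset.dvd_sum
    intro x hx
    rw [Multiset.mem_filter] at hx
    obtain ⟨i, rfl⟩ := h.1 x hx.1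
    rcases Nat.eq_zero_or_pos i with rfl | hi
    · simp at hx
    · exact dvd_pow_self 2 hi.ne'
  have hsplit : (P.parts.filter (1 = ·)).sum + (P.parts.filter (¬ 1 = ·)).sum = n := by
    rw [← Multiset.sum_add, Multiset.filter_add_not, P.parts_sum]
  have hone : (P.parts.filter (1 = ·)).sum = P.parts.count 1 := by
    rw [Multiset.filter_eq, Multiset.sum_replicate, smul_eq_mul, mul_one]
  rw [hone] at hsplit
  omega

def consOne {n : ℕ} (P : Nat.Partition n) : Nat.Partition (n + 1) where
  parts := 1 ::ₘ P.parts
  parts_pos := fun hi => by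
    rcases Multiset.mem_cons.1 hi with rfl | h
    · norm_num
    · exact P.parts_pos h
  parts_sum := by rw [Multiset.sum_cons, P.parts_sum, add_comm]

lemma res_consOne {n : ℕ} {P : Nat.Partition n} (h : Res P) : Res (consOne P) := by
  constructor
  · intro x hx
    rcases Multiset.mem_cons.1 hx with rfl | hx'
    · exact ⟨0, rfl⟩
    · exact h.1 x hx'
  · intro i hi j hj
    rcases Nat.eq_zero_or_pos j with rfl | hjpos
    · show (2:ℕ)^0 ∈ 1 ::ₘ P.parts
      simpa using Multiset.mem_cons_self 1 P.parts
    · have hine : (2:ℕ) ^ i ≠ 1 := by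
        have : 1 < (2:ℕ) ^ i := Nat.one_lt_two_pow_iff.2 (by omega)
        omega
      have hi' : (2:ℕ) ^ i ∈ P.parts := by
        rcases Multiset.mem_cons.1 hi with he | h'
        · exact absurd he hine
        · exact h'
      have := h.2 i hi' j hj
      exact Multiset.mem_cons_of_mem this

def eraseOne {n : ℕ} (P : Nat.Partition (n + 1)) (h1 : 1 ∈ P.parts) : Nat.Partition n where
  parts := P.parts.erase 1
  parts_pos := fun hi => P.parts_pos (Multiset.mem_of_mem_erase hi)
  parts_sum := by
    have hc : 1 ::ₘ P.parts.erase 1 = P.parts := Multiset.cons_erase h1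
    have := P.parts_sum
    rw [← hc, Multiset.sum_cons] at this
    omega

lemma res_eraseOne {n : ℕ} {P : Nat.Partition (n + 1)} (h : Res P) (h1 : 1 ∈ P.parts)
    (h2 : 1 ∈ P.parts.erase 1) : Res (eraseOne P h1) := by
  constructor
  · intro x hx
    exact h.1 x (Multiset.mem_of_mem_erase hx)
  · intro i hi j hj
    have hi' : (2:ℕ) ^ i ∈ P.parts := Multiset.mem_of_mem_erase hi
    have hjmem := h.2 i hi' j hj
    rcases Nat.eq_zero_or_pos j with rfl | hjpos
    · simpa [eraseOne] using h2
    · have : (2:ℕ) ^ j ≠ 1 := by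
        have : 1 < (2:ℕ) ^ j := Nat.one_lt_two_pow_iff.2 (by omega)
        omega
      exact (Multiset.mem_erase_of_ne this).2 hjmem

lemma C_even (t : ℕ) : C (2 * t + 2) = C (2 * t + 1) := by
  symm
  apply Nat.card_congr
  apply Equiv.ofBijective (f := fun P : {P : Nat.Partition (2 * t + 1) // Res P} =>
    (⟨consOne P.1, res_consOne P.2⟩ : {P : Nat.Partition (2 * t + 2) // Res P}))
  constructor
  · rintro ⟨P, hP⟩ ⟨Q, hQ⟩ hPQ
    simp only [Subtype.mk.injEq] at hPQ ⊢
    ext1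
    have : (consOne P).parts = (consOne Q).parts := by rw [hPQ]
    simpa [consOne] using this
  · rintro ⟨Q, hQ⟩
    have h1 : 1 ∈ Q.parts := one_mem (by omega) hQ
    have hcnt := count_one_mod hQ
    have h1' : 1 ∈ Q.parts.erase 1 := by
      rw [← Multiset.count_pos, Multiset.count_erase_self]
      have : 1 ≤ Q.parts.count 1 := Multiset.one_le_count_iff_mem.2 h1
      omega
    refine ⟨⟨eraseOne Q h1, res_eraseOne hQ h1 h1'⟩, ?_⟩
    simp only [Subtype.mk.injEq]
    ext1
    simpa [consOne, eraseOne] using Multiset.cons_erase h1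

lemma pow_ne_one {i : ℕ} (hi : 0 < i) : (2:ℕ) ^ i ≠ 1 := by
  have : 1 < (2:ℕ) ^ i := Nat.one_lt_two_pow_iff.2 (by omega)
  omega

def dblConsOne {n : ℕ} (P : Nat.Partition n) : Nat.Partition (2 * n + 1) where
  parts := 1 ::ₘ P.parts.map (2 * ·)
  parts_pos := fun hi => by
    rcases Multiset.mem_cons.1 hi with rfl | h
    · norm_num
    · obtain ⟨x, hx, rfl⟩ := Multiset.mem_map.1 h
      have := P.parts_pos hx
      omega
  parts_sum := by
    rw [Multiset.sum_cons]
    have : (P.parts.map (2 * ·)).sum = 2 * P.parts.sum := by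
      simpa using Multiset.sum_map_mul_left (s := P.parts) (a := 2) (f := id)
    rw [this, P.parts_sum]
    omega

lemma res_dblConsOne {n : ℕ} {P : Nat.Partition n} (h : Res P) : Res (dblConsOne P) := by
  constructor
  · intro x hx
    rcases Multiset.mem_cons.1 hx with rfl | h'
    · exact ⟨0, rfl⟩
    · obtain ⟨y, hy, rfl⟩ := Multiset.mem_map.1 h'
      obtain ⟨i, rfl⟩ := h.1 y hy
      exact ⟨i + 1, by ring⟩
  · intro i hi j hj
    rcases Nat.eq_zero_or_pos j with rfl | hjpos
    · show (2:ℕ)^0 ∈ 1 ::ₘ _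
      simp
    · have hipos : 0 < i := by omega
      have hi' : (2:ℕ) ^ i ∈ P.parts.map (2 * ·) := by
        rcases Multiset.mem_cons.1 hi with he | h'
        · exact absurd he (pow_ne_one hipos)
        · exact h'
      obtain ⟨y, hy, hy2⟩ := Multiset.mem_map.1 hi'
      have hyval : y = 2 ^ (i - 1) := by
        have : (2:ℕ) ^ i = 2 * 2 ^ (i - 1) := by
          rw [← pow_succ']
          congr 1
          omega
        omega
      subst hyval
      have hmem := h.2 (i - 1) hy (j - 1) (by omega)
      apply Multiset.mem_cons_of_mem
      apply Multiset.mem_map.2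
      refine ⟨2 ^ (j - 1), hmem, ?_⟩
      rw [← pow_succ']
      congr 1
      omega

lemma map_half_double {s : Multiset ℕ} (h : ∀ x ∈ s, 2 ∣ x) :
    (s.map (· / 2)).map (2 * ·) = s := by
  rw [Multiset.map_map]
  have : s.map ((2 * ·) ∘ (· / 2)) = s.map id := by
    apply Multiset.map_congr rfl
    intro x hx
    have := h x hx
    simp only [Function.comp_apply, id_eq]
    omega
  rw [this, Multiset.map_id]

lemma sum_map_half {s : Multiset ℕ} (h : ∀ x ∈ s, 2 ∣ x) :
    2 * (s.map (· / 2)).sum = s.sum := by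
  conv_rhs => rw [← map_half_double h]
  simpa using (Multiset.sum_map_mul_left (s := s.map (· / 2)) (a := 2) (f := id)).symm

lemma C_odd (m : ℕ) (hm : 1 ≤ m) : C (2 * m + 1) = C (2 * m) + C m := by
  unfold C
  rw [← Nat.card_sum]
  symm
  apply Nat.card_congr
  apply Equiv.ofBijective (f := fun Q : {P : Nat.Partition (2 * m) // Res P} ⊕
      {P : Nat.Partition m // Res P} =>
    Sum.elim
      (fun Q : {P : Nat.Partition (2 * m) // Res P} =>
        (⟨consOne Q.1, res_consOne Q.2⟩ : {P : Nat.Partition (2 * m + 1) // Res P}))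
      (fun Q : {P : Nat.Partition m // Res P} =>
        (⟨dblConsOne Q.1, res_dblConsOne Q.2⟩ : {P : Nat.Partition (2 * m + 1) // Res P})) Q)
  constructor
  · rintro (⟨P, hP⟩ | ⟨P, hP⟩) (⟨Q, hQ⟩ | ⟨Q, hQ⟩) hPQ <;>
      simp only [Sum.elim_inl, Sum.elim_inr, Subtype.mk.injEq] at hPQ
    · have : (consOne P).parts = (consOne Q).parts := by rw [hPQ]
      simp only [consOne, Multiset.cons_inj_right] at this
      simp [Nat.Partition.ext this]
    · -- impossible: count of 1
      exfalso
      have h1P : 1 ∈ P.parts := one_mem (by omega) hP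
      have hc : ((consOne P).parts).count 1 = ((dblConsOne Q).parts).count 1 := by rw [hPQ]
      simp only [consOne, dblConsOne, Multiset.count_cons_self] at hc
      have hnot : (1:ℕ) ∉ Q.parts.map (2 * ·) := by
        intro hmem
        obtain ⟨y, hy, hy2⟩ := Multiset.mem_map.1 hmem
        omega
      rw [Multiset.count_eq_zero_of_notMem hnot] at hc
      have : 1 ≤ P.parts.count 1 := Multiset.one_le_count_iff_mem.2 h1P
      omega
    · exfalso
      have h1Q : 1 ∈ Q.parts := one_mem (by omega) hQ
      have hc : ((dblConsOne P).parts).count 1 = ((consOne Q).parts).count 1 := by rw [hPQ]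
      simp only [consOne, dblConsOne, Multiset.count_cons_self] at hc
      have hnot : (1:ℕ) ∉ P.parts.map (2 * ·) := by
        intro hmem
        obtain ⟨y, hy, hy2⟩ := Multiset.mem_map.1 hmem
        omega
      rw [Multiset.count_eq_zero_of_notMem hnot] at hc
      have : 1 ≤ Q.parts.count 1 := Multiset.one_le_count_iff_mem.2 h1Q
      omega
    · have : (dblConsOne P).parts = (dblConsOne Q).parts := by rw [hPQ]
      simp only [dblConsOne, Multiset.cons_inj_right] at this
      have hmapinj : Function.Injective (fun x : ℕ => 2 * x) := mul_right_injective₀ two_ne_zero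
      have := Multiset.map_injective hmapinj this
      simp [Nat.Partition.ext this]
  · rintro ⟨P, hP⟩
    have h1 : 1 ∈ P.parts := one_mem (by omega) hP
    by_cases hcase : 1 ∈ P.parts.erase 1
    · refine ⟨Sum.inl ⟨eraseOne P h1, res_eraseOne hP h1 hcase⟩, ?_⟩
      simp only [Sum.elim_inl, Subtype.mk.injEq]
      ext1
      simpa [consOne, eraseOne] using Multiset.cons_erase h1
    · -- all parts of the erased multiset are even
      have heven : ∀ x ∈ P.parts.erase 1, 2 ∣ x := by
        intro x hx
        obtain ⟨i, rfl⟩ := hP.1 x (Multiset.mem_of_mem_erase hx)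
        rcases Nat.eq_zero_or_pos i with rfl | hi
        · exact absurd (by simpa using hx) hcase
        · exact dvd_pow_self 2 hi.ne'
      have hsum : (P.parts.erase 1).sum = 2 * m := by
        have hc : 1 ::ₘ P.parts.erase 1 = P.parts := Multiset.cons_erase h1
        have hs := P.parts_sum
        rw [← hc, Multiset.sum_cons] at hs
        omega
      have hsum2 : ((P.parts.erase 1).map (· / 2)).sum = m := by
        have := sum_map_half heven
        omega
      set Q : Nat.Partition m :=
        ⟨(P.parts.erase 1).map (· / 2),
         fun {y} hy => by
           obtain ⟨x, hx, rfl⟩ := Multiset.mem_map.1 hy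
           have h2 := heven x hx
           have h3 := P.parts_pos (Multiset.mem_of_mem_erase hx)
           omega,
         hsum2⟩ with hQdef
      have hQres : Res Q := by
        constructor
        · intro y hy
          obtain ⟨x, hx, rfl⟩ := Multiset.mem_map.1 hy
          obtain ⟨i, rfl⟩ := hP.1 x (Multiset.mem_of_mem_erase hx)
          have hi : 0 < i := by
            rcases Nat.eq_zero_or_pos i with rfl | hi
            · exact absurd (by simpa using hx) hcase
            · exact hi
          refine ⟨i - 1, ?_⟩
          have : (2:ℕ) ^ i = 2 * 2 ^ (i - 1) := by
            rw [← pow_succ']; congr 1; omega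
          omega
        · intro i hi j hj
          obtain ⟨x, hx, hx2⟩ := Multiset.mem_map.1 hi
          obtain ⟨k, rfl⟩ := hP.1 x (Multiset.mem_of_mem_erase hx)
          have hk : 0 < k := by
            rcases Nat.eq_zero_or_pos k with rfl | hk
            · exact absurd (by simpa using hx) hcase
            · exact hk
          have hkeq : k = i + 1 := by
            have h2k : (2:ℕ) ^ k = 2 * 2 ^ (k - 1) := by
              rw [← pow_succ']; congr 1; omega
            have : (2:ℕ) ^ (k - 1) = 2 ^ i := by omega
            have := Nat.pow_right_injective (le_refl 2) this
            omega
          subst hkeq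
          have hmem := hP.2 (i + 1) (Multiset.mem_of_mem_erase hx) (j + 1) (by omega)
          have hmem' : (2:ℕ) ^ (j + 1) ∈ P.parts.erase 1 :=
            (Multiset.mem_erase_of_ne (pow_ne_one (by omega))).2 hmem
          apply Multiset.mem_map.2
          refine ⟨2 ^ (j + 1), hmem', ?_⟩
          have : (2:ℕ) ^ (j + 1) = 2 * 2 ^ j := by rw [← pow_succ']
          omega
      refine ⟨Sum.inr ⟨Q, hQres⟩, ?_⟩
      simp only [Sum.elim_inr, Subtype.mk.injEq]
      ext1
      show 1 ::ₘ Q.parts.map (2 * ·) = P.parts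
      rw [hQdef]
      show 1 ::ₘ ((P.parts.erase 1).map (· / 2)).map (2 * ·) = P.parts
      rw [map_half_double heven, Multiset.cons_erase h1]

lemma C_one : C 1 = 1 := by
  have hall : ∀ P : Nat.Partition 1, Res P := by
    intro P
    constructor
    · intro x hx
      rw [Nat.Partition.partition_one_parts] at hx
      rw [Multiset.mem_singleton] at hx
      exact ⟨0, by simp [hx]⟩
    · intro i hi j hj
      rw [Nat.Partition.partition_one_parts, Multiset.mem_singleton] at hi
      have : i = 0 := by
        by_contra h
        exact pow_ne_one (by omega) hi
      omega
  unfold C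
  rw [Nat.card_congr (Equiv.subtypeUnivEquiv hall)]
  exact Nat.card_unique

lemma C_mod_two (n : ℕ) : C (8 * n + 4) % 2 = 0 := by
  induction n with
  | zero =>
    have h4 : C 4 = C 3 := by have := C_even 1; norm_num at this; omega
    have h3 : C 3 = C 2 + C 1 := by have := C_odd 1 (by omega); norm_num at this; omega
    have h2 : C 2 = C 1 := by have := C_even 0; norm_num at this; omega
    have h1 : C 1 = 1 := C_one
    norm_num
    omega
  | succ k ih =>
    have e1 : C (8 * k + 12) = C (8 * k + 11) := by
      have := C_even (4 * k + 5); ring_nf at this ⊢; omega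
    have e2 : C (8 * k + 11) = C (8 * k + 10) + C (4 * k + 5) := by
      have := C_odd (4 * k + 5) (by omega); ring_nf at this ⊢; omega
    have e3 : C (8 * k + 10) = C (8 * k + 9) := by
      have := C_even (4 * k + 4); ring_nf at this ⊢; omega
    have e4 : C (8 * k + 9) = C (8 * k + 8) + C (4 * k + 4) := by
      have := C_odd (4 * k + 4) (by omega); ring_nf at this ⊢; omega
    have e5 : C (4 * k + 5) = C (4 * k + 4) + C (2 * k + 2) := by
      have := C_odd (2 * k + 2) (by omega); ring_nf at this ⊢; omega
    have e6 : C (8 * k + 8) = C (8 * k + 7) := by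
      have := C_even (4 * k + 3); ring_nf at this ⊢; omega
    have e7 : C (8 * k + 7) = C (8 * k + 6) + C (4 * k + 3) := by
      have := C_odd (4 * k + 3) (by omega); ring_nf at this ⊢; omega
    have e8 : C (8 * k + 6) = C (8 * k + 5) := by
      have := C_even (4 * k + 2); ring_nf at this ⊢; omega
    have e9 : C (8 * k + 5) = C (8 * k + 4) + C (4 * k + 2) := by
      have := C_odd (4 * k + 2) (by omega); ring_nf at this ⊢; omega
    have e10 : C (4 * k + 3) = C (4 * k + 2) + C (2 * k + 1) := by
      have := C_odd (2 * k + 1) (by omega); ring_nf at this ⊢; omega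
    have e11 : C (2 * k + 2) = C (2 * k + 1) := by
      have := C_even k; ring_nf at this ⊢; omega
    have goal_eq : 8 * (k + 1) + 4 = 8 * k + 12 := by ring
    rw [goal_eq]
    omega

/-- The number of restricted `m`-ary partitions of `n`: partitions of `n` into
powers of `m` such that whenever `m ^ i` is a part, all of `m ^ 0, …, m ^ (i-1)`
are also parts. -/
noncomputable def restrictedMaryCount (m n : ℕ) : ℕ :=
  Nat.card {P : Nat.Partition n //
    (∀ x ∈ P.parts, ∃ i, x = m ^ i) ∧
    ∀ i, m ^ i ∈ P.parts → ∀ j < i, m ^ j ∈ P.parts}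

theorem stmt_11 (n : ℕ) : restrictedMaryCount 2 (8 * n + 4) ≡ 0 [MOD 2] := by
  have : restrictedMaryCount 2 (8 * n + 4) = C (8 * n + 4) := rfl
  rw [this, Nat.ModEq]
  simpa using C_mod_two n
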